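/- Let ξ₁ and η be lightlike vectors in ℝ⁴ (i.e., in the Minkowski space ℝ^{1+3}). Then for every ε > 0 there exist lightlike vectors ξ₂, ξ₃ ∈ ℝ⁴ with |ξ₂ − ξ₁| < ε and |ξ₃ − ξ₁| < ε such that η lies in the linear span of ξ₁, ξ₂, ξ₃. -/

import Mathlib

/-- A vector in Minkowski space `ℝ^{1+3}` is *lightlike* if it is nonzero and the
Minkowski quadratic form `-ξ₀² + ξ₁² + ξ₂² + ξ₃²` vanishes on it. -/
def IsLightlike (ξ : EuclideanSpace ℝ (Fin 4)) : Prop :=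
  ξ ≠ 0 ∧ -(ξ 0) ^ 2 + (ξ 1) ^ 2 + (ξ 2) ^ 2 + (ξ 3) ^ 2 = 0

open RealInnerProductSpace Module

private lemma qform (x : EuclideanSpace ℝ (Fin 4)) :
    -(x 0) ^ 2 + (x 1) ^ 2 + (x 2) ^ 2 + (x 3) ^ 2 = ⟪x, x⟫ - 2 * (x 0) ^ 2 := by
  rw [PiLp.inner_apply]
  show _ = (∑ i : Fin 4, x i * x i) - _
  rw [Fin.sum_univ_four]; ring

private lemma exists_perp (a b : EuclideanSpace ℝ (Fin 4)) :
    ∃ w : EuclideanSpace ℝ (Fin 4), w ≠ 0 ∧ ⟪a, w⟫ = 0 ∧ ⟪b, w⟫ = 0 := by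
  classical
  set K := Submodule.span ℝ ({a, b} : Set (EuclideanSpace ℝ (Fin 4))) with hK
  have hle : finrank ℝ K ≤ 2 := by
    have h1 : ({a, b} : Set (EuclideanSpace ℝ (Fin 4))) = ↑({a, b} : Finset _) := by simp
    rw [hK, h1]
    exact (finrank_span_finset_le_card _).trans ((Finset.card_insert_le _ _).trans (by simp))
  have hperp : Kᗮ ≠ ⊥ := by
    intro h
    have h2 := K.finrank_add_finrank_orthogonal
    rw [h, finrank_bot] at h2
    simp [finrank_euclideanSpace_fin] at h2
    omega
  obtain ⟨w, hwK, hw0⟩ := Kᗮ.exists_mem_ne_zero_of_ne_bot hperp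
  exact ⟨w, hw0, (Submodule.mem_orthogonal _ _).mp hwK a (Submodule.subset_span (by simp)),
    (Submodule.mem_orthogonal _ _).mp hwK b (Submodule.subset_span (by simp))⟩

private lemma comb (e U W : EuclideanSpace ℝ (Fin 4)) (t r d s p q : ℝ)
    (ht : t ≠ 0) (hr : r ≠ 0) (hd : d ≠ 0) :
    s • e + p • U + q • W =
      (s / t - (s / t - p) / r) • (t • e + U)
      + (((s / t - p) / r + q / d) / 2) • (t • e + (1 - r) • U + d • W)
      + (((s / t - p) / r - q / d) / 2) • (t • e + (1 - r) • U - d • W) := by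
  match_scalars
  · field_simp; ring
  · field_simp; ring
  · field_simp; ring



/-- Lemma 3.2 of the paper: given lightlike `ξ₁` and `η` in Minkowski space, in any
neighbourhood of `ξ₁` there exist lightlike `ξ₂, ξ₃` with `η ∈ span(ξ₁, ξ₂, ξ₃)`. -/
theorem stmt_0 (ξ₁ η : EuclideanSpace ℝ (Fin 4))
    (hξ₁ : IsLightlike ξ₁) (hη : IsLightlike η) :
    ∀ ε > 0, ∃ ξ₂ ξ₃ : EuclideanSpace ℝ (Fin 4),
      IsLightlike ξ₂ ∧ IsLightlike ξ₃ ∧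
      ‖ξ₂ - ξ₁‖ < ε ∧ ‖ξ₃ - ξ₁‖ < ε ∧
      η ∈ Submodule.span ℝ ({ξ₁, ξ₂, ξ₃} : Set (EuclideanSpace ℝ (Fin 4))) := by
  intro ε hε
  obtain ⟨hξ₁ne, hξ₁q⟩ := hξ₁
  have ht0 : ξ₁ 0 ≠ 0 := by
    intro h0
    apply hξ₁ne
    have h1 : (ξ₁ 1) ^ 2 + (ξ₁ 2) ^ 2 + (ξ₁ 3) ^ 2 = 0 := by rw [h0] at hξ₁q; linarith
    have e1 : ξ₁ 1 = 0 := by nlinarith [sq_nonneg (ξ₁ 1), sq_nonneg (ξ₁ 2), sq_nonneg (ξ₁ 3)]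
    have e2 : ξ₁ 2 = 0 := by nlinarith [sq_nonneg (ξ₁ 1), sq_nonneg (ξ₁ 2), sq_nonneg (ξ₁ 3)]
    have e3 : ξ₁ 3 = 0 := by nlinarith [sq_nonneg (ξ₁ 1), sq_nonneg (ξ₁ 2), sq_nonneg (ξ₁ 3)]
    ext i
    fin_cases i <;> simp [h0, e1, e2, e3]
  obtain ⟨t, htdef⟩ : ∃ x : ℝ, x = ξ₁ 0 := ⟨_, rfl⟩
  have ht : t ≠ 0 := by rw [htdef]; exact ht0
  have ht2 : (0:ℝ) < t ^ 2 := by positivity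
  obtain ⟨e₀, he₀def⟩ : ∃ x : EuclideanSpace ℝ (Fin 4), x = EuclideanSpace.single 0 1 := ⟨_, rfl⟩
  have hsingle : ∀ x : EuclideanSpace ℝ (Fin 4), ⟪e₀, x⟫ = x 0 := by
    intro x; rw [he₀def, EuclideanSpace.inner_single_left]; simp
  have hee : ⟪e₀, e₀⟫ = 1 := by rw [hsingle, he₀def]; simp
  have hξ₁inner : ⟪ξ₁, ξ₁⟫ = 2 * t ^ 2 := by
    have h := qform ξ₁
    rw [hξ₁q, ← htdef] at h
    linarith
  obtain ⟨U, hUdef⟩ : ∃ x : EuclideanSpace ℝ (Fin 4), x = ξ₁ - t • e₀ := ⟨_, rfl⟩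
  have heU : ⟪e₀, U⟫ = 0 := by
    rw [hUdef, inner_sub_right, real_inner_smul_right, hee, hsingle, ← htdef]; ring
  have hUU : ⟪U, U⟫ = t ^ 2 := by
    rw [hUdef, inner_sub_left, inner_sub_right, inner_sub_right, real_inner_smul_left,
      real_inner_smul_right, real_inner_smul_left, real_inner_smul_right, hee,
      real_inner_comm e₀ ξ₁, hsingle, ← htdef, hξ₁inner]
    ring
  have hξ₁dec : ξ₁ = t • e₀ + U := by rw [hUdef]; abel
  obtain ⟨s, hsdef⟩ : ∃ x : ℝ, x = η 0 := ⟨_, rfl⟩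
  obtain ⟨V, hVdef⟩ : ∃ x : EuclideanSpace ℝ (Fin 4), x = η - s • e₀ := ⟨_, rfl⟩
  have heV : ⟪e₀, V⟫ = 0 := by
    rw [hVdef, inner_sub_right, real_inner_smul_right, hee, hsingle, ← hsdef]; ring
  obtain ⟨p, hpdef⟩ : ∃ x : ℝ, x = ⟪U, V⟫ / t ^ 2 := ⟨_, rfl⟩
  obtain ⟨W', hW'def⟩ : ∃ x : EuclideanSpace ℝ (Fin 4), x = V - p • U := ⟨_, rfl⟩
  have heW' : ⟪e₀, W'⟫ = 0 := by
    rw [hW'def, inner_sub_right, real_inner_smul_right, heU, heV]; ring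
  have hUW' : ⟪U, W'⟫ = 0 := by
    rw [hW'def, inner_sub_right, real_inner_smul_right, hUU, hpdef]
    field_simp
    ring
  obtain ⟨w₀, hw₀ne, hw₀e, hw₀U, hW'w₀⟩ :
      ∃ w₀ : EuclideanSpace ℝ (Fin 4), w₀ ≠ 0 ∧ ⟪e₀, w₀⟫ = 0 ∧ ⟪U, w₀⟫ = 0 ∧
        W' = (‖W'‖ / ‖w₀‖) • w₀ := by
    by_cases hW'0 : W' = 0
    · obtain ⟨w₀, hw₀ne, h1, h2⟩ := exists_perp e₀ U
      exact ⟨w₀, hw₀ne, h1, h2, by rw [hW'0]; simp⟩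
    · refine ⟨W', hW'0, heW', hUW', ?_⟩
      rw [div_self (norm_ne_zero_iff.mpr hW'0), one_smul]
  have hw₀norm : ‖w₀‖ ≠ 0 := norm_ne_zero_iff.mpr hw₀ne
  obtain ⟨W, hWdef⟩ : ∃ x : EuclideanSpace ℝ (Fin 4), x = (|t| / ‖w₀‖) • w₀ := ⟨_, rfl⟩
  have heW : ⟪e₀, W⟫ = 0 := by rw [hWdef, real_inner_smul_right, hw₀e]; ring
  have hUW : ⟪U, W⟫ = 0 := by rw [hWdef, real_inner_smul_right, hw₀U]; ring
  have hUe : ⟪U, e₀⟫ = 0 := by rw [real_inner_comm]; exact heU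
  have hWW : ⟪W, W⟫ = t ^ 2 := by
    rw [hWdef, real_inner_smul_left, real_inner_smul_right, real_inner_self_eq_norm_sq,
      ← sq_abs t]
    field_simp
  have hWe : ⟪W, e₀⟫ = 0 := by rw [real_inner_comm]; exact heW
  have hWU : ⟪W, U⟫ = 0 := by rw [real_inner_comm]; exact hUW
  obtain ⟨q, hqdef⟩ : ∃ x : ℝ, x = ‖W'‖ / |t| := ⟨_, rfl⟩
  have htabs : |t| ≠ 0 := abs_ne_zero.mpr ht
  have hW'q : W' = q • W := by
    have hc' : q * (|t| / ‖w₀‖) = ‖W'‖ / ‖w₀‖ := by rw [hqdef]; field_simp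
    rw [hWdef, smul_smul, hc']
    exact hW'w₀
  have hηdec : η = s • e₀ + p • U + q • W := by
    rw [← hW'q, hW'def, hVdef]; abel
  -- choose the rotation parameters
  obtain ⟨r, hrdef⟩ : ∃ x : ℝ, x = min (1/2) (ε ^ 2 / (4 * t ^ 2)) := ⟨_, rfl⟩
  have hr0 : 0 < r := hrdef ▸ lt_min (by norm_num) (by positivity)
  have hr2 : r ≤ 1/2 := hrdef ▸ min_le_left _ _
  obtain ⟨c, hcdef⟩ : ∃ x : ℝ, x = 1 - r := ⟨_, rfl⟩
  have hc0 : 0 < c := by rw [hcdef]; linarith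
  have hc1 : c < 1 := by rw [hcdef]; linarith
  have hc2 : c ^ 2 < 1 := pow_lt_one₀ hc0.le hc1 (by norm_num)
  obtain ⟨d, hddef⟩ : ∃ x : ℝ, x = Real.sqrt (1 - c ^ 2) := ⟨_, rfl⟩
  have hd0 : 0 < d := by rw [hddef]; exact Real.sqrt_pos.mpr (by linarith)
  have hd2 : d ^ 2 = 1 - c ^ 2 := by rw [hddef, Real.sq_sqrt (by linarith)]
  obtain ⟨ξ₂, hξ₂def⟩ : ∃ x : EuclideanSpace ℝ (Fin 4), x = t • e₀ + c • U + d • W := ⟨_, rfl⟩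
  obtain ⟨ξ₃, hξ₃def⟩ : ∃ x : EuclideanSpace ℝ (Fin 4), x = t • e₀ + c • U - d • W := ⟨_, rfl⟩
  have hξ₂0' : ⟪e₀, ξ₂⟫ = t := by
    rw [hξ₂def]
    simp only [inner_add_right, real_inner_smul_right, hee, heU, heW]
    ring
  have hξ₂0 : ξ₂ 0 = t := (hsingle ξ₂).symm.trans hξ₂0'
  have hξ₃0' : ⟪e₀, ξ₃⟫ = t := by
    rw [hξ₃def]
    simp only [inner_sub_right, inner_add_right, real_inner_smul_right, hee, heU, heW]
    ring
  have hξ₃0 : ξ₃ 0 = t := (hsingle ξ₃).symm.trans hξ₃0'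
  have hξ₂inner : ⟪ξ₂, ξ₂⟫ = 2 * t ^ 2 := by
    rw [hξ₂def]
    simp only [inner_add_left, inner_add_right, real_inner_smul_left, real_inner_smul_right,
      hee, heU, heW, hUU, hUW, hWW, hUe, hWe, hWU]
    linear_combination t ^ 2 * hd2
  have hξ₃inner : ⟪ξ₃, ξ₃⟫ = 2 * t ^ 2 := by
    rw [hξ₃def]
    simp only [inner_sub_left, inner_sub_right, inner_add_left, inner_add_right,
      real_inner_smul_left, real_inner_smul_right,
      hee, heU, heW, hUU, hUW, hWW, hUe, hWe, hWU]
    linear_combination t ^ 2 * hd2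
  have hne : ∀ x : EuclideanSpace ℝ (Fin 4), x 0 = t → x ≠ 0 := by
    intro x hx h0
    rw [h0] at hx
    exact ht hx.symm
  have hlight₂ : IsLightlike ξ₂ := by
    refine ⟨hne _ hξ₂0, ?_⟩
    rw [qform, hξ₂0, hξ₂inner]; ring
  have hlight₃ : IsLightlike ξ₃ := by
    refine ⟨hne _ hξ₃0, ?_⟩
    rw [qform, hξ₃0, hξ₃inner]; ring
  -- distance bounds
  have hdist : ∀ x : EuclideanSpace ℝ (Fin 4), ⟪x - ξ₁, x - ξ₁⟫ < ε ^ 2 → ‖x - ξ₁‖ < ε := by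
    intro x hx
    have h1 : ‖x - ξ₁‖ ^ 2 < ε ^ 2 := by rwa [← real_inner_self_eq_norm_sq]
    exact lt_of_pow_lt_pow_left₀ 2 hε.le h1
  have hkey : ((c - 1) ^ 2 + d ^ 2) * t ^ 2 < ε ^ 2 := by
    have h1 : (c - 1) ^ 2 + d ^ 2 = 2 * r := by rw [hd2, hcdef]; ring
    rw [h1]
    have h2 : r ≤ ε ^ 2 / (4 * t ^ 2) := hrdef ▸ min_le_right _ _
    have h3 : r * (4 * t ^ 2) ≤ ε ^ 2 := (le_div_iff₀ (by positivity)).mp h2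
    linarith [h3, mul_pos hr0 ht2]
  have hd₂ : ξ₂ - ξ₁ = (c - 1) • U + d • W := by
    rw [hξ₂def, hξ₁dec]; module
  have hd₃ : ξ₃ - ξ₁ = (c - 1) • U + (-d) • W := by
    rw [hξ₃def, hξ₁dec]; module
  have hdist₂ : ‖ξ₂ - ξ₁‖ < ε := by
    apply hdist
    rw [hd₂]
    simp only [inner_add_left, inner_add_right, real_inner_smul_left, real_inner_smul_right,
      hUU, hUW, hWW, hWU]
    linarith [hkey, sq_nonneg (c-1), sq_nonneg d]
  have hdist₃ : ‖ξ₃ - ξ₁‖ < ε := by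
    apply hdist
    rw [hd₃]
    simp only [inner_add_left, inner_add_right, real_inner_smul_left, real_inner_smul_right,
      hUU, hUW, hWW, hWU]
    linarith [hkey, sq_nonneg (c-1), sq_nonneg d]
  -- the span property
  have hcomb : η = (s / t - (s / t - p) / r) • ξ₁
      + (((s / t - p) / r + q / d) / 2) • ξ₂ + (((s / t - p) / r - q / d) / 2) • ξ₃ := by
    rw [hηdec, hξ₁dec, hξ₂def, hξ₃def, hcdef]
    exact comb e₀ U W t r d s p q ht hr0.ne' hd0.ne'
  have m1 : ξ₁ ∈ ({ξ₁, ξ₂, ξ₃} : Set (EuclideanSpace ℝ (Fin 4))) := by simp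
  have m2 : ξ₂ ∈ ({ξ₁, ξ₂, ξ₃} : Set (EuclideanSpace ℝ (Fin 4))) := by simp
  have m3 : ξ₃ ∈ ({ξ₁, ξ₂, ξ₃} : Set (EuclideanSpace ℝ (Fin 4))) := by simp
  refine ⟨_, _, hlight₂, hlight₃, hdist₂, hdist₃, ?_⟩
  rw [hcomb]
  exact Submodule.add_mem _ (Submodule.add_mem _
      (Submodule.smul_mem _ _ (Submodule.subset_span m1))
      (Submodule.smul_mem _ _ (Submodule.subset_span m2)))
      (Submodule.smul_mem _ _ (Submodule.subset_span m3))
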